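/- For every L ≥ 1 and every set A of spin configurations on Λ_L, the spin marginal of P_L^{±,c,h} decomposes as P_L^{±,c,h}(A × {0,1}^{Λ_L}) = Σ_M P_L^{±,c,h}(M_L = M) · ℙ_L^{±,J}(A | M_L = M), where the sum runs over all values M attainable by M_L; that is, conditioned on its total magnetization, the spin marginal of P_L^{±,c,h} coincides with the zero-field Ising measure conditioned on the same magnetization. -/

import Mathlib

open scoped BigOperators Classical
open Filter

noncomputable section

abbrev Site (d : ℕ) := Fin d → ℤ

/-- The box of `L^d` sites in `ℤ^d` (approximately) centered at the origin. -/
def box (d L : ℕ) : Finset (Site d) :=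
  Fintype.piFinset fun _ : Fin d => Finset.Ico (-(L : ℤ) / 2) ((L : ℤ) - (L : ℤ) / 2)

/-- Ising spin configurations in the box (true = +1, false = -1). -/
abbrev Spins (d L : ℕ) := {x : Site d // x ∈ box d L} → Bool

/-- Salt configurations in the box (true = occupied). -/
abbrev Salts (d L : ℕ) := {x : Site d // x ∈ box d L} → Bool

/-- Spin value (±1) of a Boolean spin. -/
def sval (b : Bool) : ℤ := if b then 1 else -1

/-- Overall magnetization `M_L`. -/
def magn (d L : ℕ) (σ : Spins d L) : ℤ := ∑ x, sval (σ x)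

/-- Total amount of salt `N_L`. -/
def saltNum (d L : ℕ) (S : Salts d L) : ℕ := ∑ x, if S x then 1 else 0

/-- Amount of salt on plus spins `Q_L`. -/
def saltPlus (d L : ℕ) (σ : Spins d L) (S : Salts d L) : ℕ :=
  ∑ x, if S x && σ x then 1 else 0

/-- Spin field extended by the boundary condition `bc` outside the box. -/
def spin (d L : ℕ) (bc : Bool) (σ : Spins d L) (x : Site d) : ℤ :=
  if h : x ∈ box d L then sval (σ ⟨x, h⟩) else sval bc

/-- The set of nearest neighbors of a site. -/
def nbrs {d : ℕ} (x : Site d) : Finset (Site d) :=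
  Finset.image
    (fun p : Fin d × Bool => Function.update x p.1 (x p.1 + if p.2 then 1 else -1))
    Finset.univ

/-- `Σ_{⟨x,y⟩, x ∈ Λ_L} σ_x σ_y`, each nearest-neighbor pair counted once. -/
def pairSum (d L : ℕ) (bc : Bool) (σ : Spins d L) : ℝ :=
  ∑ x ∈ box d L, ∑ y ∈ nbrs x,
    (if y ∈ box d L then (1 : ℝ) / 2 else 1) * (spin d L bc σ x : ℝ) * (spin d L bc σ y : ℝ)

/-- Partition function of the zero-field Ising model. -/
def isingZ (d L : ℕ) (J : ℝ) (bc : Bool) : ℝ :=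
  ∑ σ : Spins d L, Real.exp (J * pairSum d L bc σ)

/-- Expectation `E_L^{±,J}` under the zero-field Ising measure. -/
def isingExp (d L : ℕ) (J : ℝ) (bc : Bool) (f : Spins d L → ℝ) : ℝ :=
  (∑ σ : Spins d L, f σ * Real.exp (J * pairSum d L bc σ)) / isingZ d L J bc

/-- Probability `ℙ_L^{±,J}` under the zero-field Ising measure. -/
def isingProb (d L : ℕ) (J : ℝ) (bc : Bool) (E : Spins d L → Prop) : ℝ :=
  isingExp d L J bc fun σ => if E σ then 1 else 0

/-- `φ_L^{±}(h) = L^{-d} log E_L^{±,J}(e^{h M_L})`. -/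
def phiL (d L : ℕ) (J : ℝ) (bc : Bool) (h : ℝ) : ℝ :=
  ((L : ℝ) ^ d)⁻¹ * Real.log (isingExp d L J bc fun σ => Real.exp (h * (magn d L σ : ℝ)))

/-- The Hamiltonian `βH` of the solvent-solute system. -/
def hamil (d L : ℕ) (J h κ : ℝ) (bc : Bool) (σ : Spins d L) (S : Salts d L) : ℝ :=
  -J * pairSum d L bc σ - h * (magn d L σ : ℝ)
    + κ * ∑ x, (if S x then (1 : ℝ) else 0) * (1 - (sval (σ x) : ℝ)) / 2

/-- The fixed amount of salt `⌊c L^d⌋`. -/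
def NLtarget (d L : ℕ) (c : ℝ) : ℤ := ⌊c * (L : ℝ) ^ d⌋

/-- `P_L^{±,c,h}(E)`: the Gibbs measure conditioned on `N_L = ⌊c L^d⌋`. -/
def condProb (d L : ℕ) (J h κ c : ℝ) (bc : Bool) (E : Spins d L → Salts d L → Prop) : ℝ :=
  (∑ σ : Spins d L, ∑ S : Salts d L,
      if E σ S ∧ (saltNum d L S : ℤ) = NLtarget d L c
      then Real.exp (-hamil d L J h κ bc σ S) else 0) /
  (∑ σ : Spins d L, ∑ S : Salts d L,
      if (saltNum d L S : ℤ) = NLtarget d L c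
      then Real.exp (-hamil d L J h κ bc σ S) else 0)

/-- Expectation under `P_L^{±,c,h}`. -/
def condExp (d L : ℕ) (J h κ c : ℝ) (bc : Bool) (f : Spins d L → Salts d L → ℝ) : ℝ :=
  (∑ σ : Spins d L, ∑ S : Salts d L,
      if (saltNum d L S : ℤ) = NLtarget d L c
      then f σ S * Real.exp (-hamil d L J h κ bc σ S) else 0) /
  (∑ σ : Spins d L, ∑ S : Salts d L,
      if (saltNum d L S : ℤ) = NLtarget d L c
      then Real.exp (-hamil d L J h κ bc σ S) else 0)

/-- Legendre transform `φ*(m) = sup_h (m h - φ(h))`. -/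
def legendre (φ : ℝ → ℝ) (m : ℝ) : ℝ := ⨆ h : ℝ, (m * h - φ h)

/-- Entropy function of the Bernoulli distribution (finite branch). -/
def entS (p : ℝ) : ℝ := p * Real.log p + (1 - p) * Real.log (1 - p)

/-- Mole fraction `p_+ = 2θc/(1+m)`. -/
def pPlus (m θ c : ℝ) : ℝ := 2 * θ * c / (1 + m)

/-- Mole fraction `p_- = 2(1-θ)c/(1-m)`. -/
def pMinus (m θ c : ℝ) : ℝ := 2 * (1 - θ) * c / (1 - m)

/-- `Ξ(m,θ;c)` (finite branch). -/
def Xi (m θ c : ℝ) : ℝ :=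
  -((1 + m) / 2) * entS (pPlus m θ c) - ((1 - m) / 2) * entS (pMinus m θ c)

/-- Entropy function with the convention `S(p) = +∞` for `p ∉ [0,1]`. -/
def entSE (p : ℝ) : EReal := if 0 ≤ p ∧ p ≤ 1 then ((entS p : ℝ) : EReal) else ⊤

/-- `-Ξ(m,θ;c)` as an extended real (`+∞` where some mole fraction leaves `[0,1]`). -/
def negXiE (m θ c : ℝ) : EReal :=
  (((1 + m) / 2 : ℝ) : EReal) * entSE (pPlus m θ c)
    + (((1 - m) / 2 : ℝ) : EReal) * entSE (pMinus m θ c)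

/-- `𝒢_{h,c}(m,θ) = -hm - κθc - Ξ(m,θ;c) + φ*(m)` as an extended real. -/
def curlyGE (h c κ : ℝ) (φs : ℝ → ℝ) (m θ : ℝ) : EReal :=
  ((-(h * m) - κ * θ * c + φs m : ℝ) : EReal) + negXiE m θ c

/-- `G_{h,c}(m) = inf_{θ ∈ [0,1]} 𝒢_{h,c}(m,θ)`. -/
def GE (h c κ : ℝ) (φs : ℝ → ℝ) (m : ℝ) : EReal :=
  ⨅ θ ∈ Set.Icc (0 : ℝ) 1, curlyGE h c κ φs m θ

/-- Extended-real logarithm (`-∞` for nonpositive arguments). -/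
def elog (x : ℝ) : EReal := if 0 < x then ((Real.log x : ℝ) : EReal) else ⊥

section Aux

variable {d L : ℕ}

/-- The salt partition function at fixed total salt, for a fixed spin configuration. -/
def Wt (d L : ℕ) (κ c : ℝ) (σ : Spins d L) : ℝ :=
  ∑ S : Salts d L, if (saltNum d L S : ℤ) = NLtarget d L c
    then Real.exp (-(κ * ∑ x, (if S x then (1 : ℝ) else 0) * (1 - (sval (σ x) : ℝ)) / 2))
    else 0

lemma magn_card (σ : Spins d L) :
    magn d L σ = 2 * ((Finset.univ.filter fun x => σ x = true).card : ℤ)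
      - (Fintype.card {x : Site d // x ∈ box d L} : ℤ) := by
  classical
  have hsplit := Finset.card_filter_add_card_filter_not
    (s := (Finset.univ : Finset {x : Site d // x ∈ box d L}))
    (p := fun x => σ x = true)
  unfold magn sval
  rw [Finset.sum_ite, Finset.sum_const, Finset.sum_const]
  simp only [Finset.card_univ] at hsplit
  simp only [nsmul_eq_mul, mul_one, mul_neg_one]
  omega

lemma exists_equiv {σ σ' : Spins d L} (hm : magn d L σ = magn d L σ') :
    ∃ e : {x : Site d // x ∈ box d L} ≃ {x : Site d // x ∈ box d L},
      ∀ x, σ (e x) = σ' x := by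
  classical
  have hcard : (Finset.univ.filter fun x => σ x = true).card
      = (Finset.univ.filter fun x => σ' x = true).card := by
    have h1 := magn_card σ
    have h2 := magn_card σ'
    omega
  have h1 : Fintype.card {x : {x : Site d // x ∈ box d L} // σ' x = true}
      = Fintype.card {x : {x : Site d // x ∈ box d L} // σ x = true} := by
    simp only [Fintype.card_subtype]; omega
  have h2 : Fintype.card {x : {x : Site d // x ∈ box d L} // ¬ σ' x = true}
      = Fintype.card {x : {x : Site d // x ∈ box d L} // ¬ σ x = true} := by
    rw [Fintype.card_subtype_compl, Fintype.card_subtype_compl, h1]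
  let e0 := Fintype.equivOfCardEq h1
  let e1 := Fintype.equivOfCardEq h2
  refine ⟨(Equiv.sumCompl (fun x => σ' x = true)).symm.trans
    ((e0.sumCongr e1).trans (Equiv.sumCompl (fun x => σ x = true))), fun x => ?_⟩
  by_cases hx : σ' x = true
  · rw [Equiv.trans_apply, Equiv.trans_apply,
      Equiv.sumCompl_symm_apply_of_pos (p := fun x => σ' x = true) hx, Equiv.sumCongr_apply, Sum.map_inl,
      Equiv.sumCompl_apply_inl]
    rw [hx]; exact (e0 ⟨x, hx⟩).2
  · rw [Equiv.trans_apply, Equiv.trans_apply,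
      Equiv.sumCompl_symm_apply_of_neg (p := fun x => σ' x = true) hx, Equiv.sumCongr_apply, Sum.map_inr,
      Equiv.sumCompl_apply_inr]
    have := (e1 ⟨x, hx⟩).2
    simp only [Bool.not_eq_true] at this hx ⊢
    rw [this, hx]

lemma Wt_eq (κ c : ℝ) {σ σ' : Spins d L} (hm : magn d L σ = magn d L σ') :
    Wt d L κ c σ = Wt d L κ c σ' := by
  classical
  obtain ⟨e, he⟩ := exists_equiv hm
  unfold Wt
  refine Fintype.sum_equiv (Equiv.arrowCongr e.symm (Equiv.refl Bool)) _ _ fun S => ?_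
  have hS : ∀ y, (Equiv.arrowCongr e.symm (Equiv.refl Bool)) S y = S (e y) := by
    intro y; simp [Equiv.arrowCongr]
  have hnum : saltNum d L ((Equiv.arrowCongr e.symm (Equiv.refl Bool)) S) = saltNum d L S := by
    unfold saltNum
    rw [← Equiv.sum_comp e (fun x => if S x then 1 else 0)]
    exact Finset.sum_congr rfl fun y _ => by rw [hS]
  have hT : (∑ x, (if ((Equiv.arrowCongr e.symm (Equiv.refl Bool)) S) x then (1 : ℝ) else 0)
        * (1 - (sval (σ' x) : ℝ)) / 2)
      = ∑ x, (if S x then (1 : ℝ) else 0) * (1 - (sval (σ x) : ℝ)) / 2 := by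
    rw [← Equiv.sum_comp e (fun x => (if S x then (1 : ℝ) else 0) * (1 - (sval (σ x) : ℝ)) / 2)]
    refine Finset.sum_congr rfl fun y _ => by rw [hS, he]
  rw [hnum, hT]

lemma salt_factor (J h κ c : ℝ) (bc : Bool) (P : Prop) (σ : Spins d L) :
    (∑ S : Salts d L, if P ∧ (saltNum d L S : ℤ) = NLtarget d L c
        then Real.exp (-hamil d L J h κ bc σ S) else 0)
      = if P then Real.exp (J * pairSum d L bc σ + h * (magn d L σ : ℝ)) * Wt d L κ c σ
        else 0 := by
  classical
  by_cases hP : P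
  · simp only [hP, true_and, if_true]
    rw [Wt, Finset.mul_sum]
    refine Finset.sum_congr rfl fun S _ => ?_
    by_cases hS : (saltNum d L S : ℤ) = NLtarget d L c
    · simp only [hS, if_true]
      rw [← Real.exp_add]
      congr 1
      unfold hamil
      ring
    · simp [hS]
  · simp [hP]

lemma condProb_eq (J h κ c : ℝ) (bc : Bool) (P : Spins d L → Prop) :
    condProb d L J h κ c bc (fun σ _ => P σ)
      = (∑ σ : Spins d L, if P σ
            then Real.exp (J * pairSum d L bc σ + h * (magn d L σ : ℝ)) * Wt d L κ c σ else 0)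
        / (∑ σ : Spins d L,
            Real.exp (J * pairSum d L bc σ + h * (magn d L σ : ℝ)) * Wt d L κ c σ) := by
  unfold condProb
  refine congrArg₂ (· / ·) ?_ ?_
  · refine Finset.sum_congr rfl fun σ _ => ?_
    exact salt_factor J h κ c bc (P σ) σ
  · refine Finset.sum_congr rfl fun σ _ => ?_
    simpa using salt_factor J h κ c bc True σ

lemma isingProb_eq (J : ℝ) (bc : Bool) (E' : Spins d L → Prop) :
    isingProb d L J bc E'
      = (∑ σ : Spins d L, if E' σ then Real.exp (J * pairSum d L bc σ) else 0)
        / isingZ d L J bc := by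
  unfold isingProb isingExp
  congr 1
  refine Finset.sum_congr rfl fun σ _ => ?_
  by_cases hE : E' σ <;> simp [hE]

lemma isingZ_pos (J : ℝ) (bc : Bool) : 0 < isingZ d L J bc :=
  Finset.sum_pos (fun σ _ => Real.exp_pos _) ⟨fun _ => true, Finset.mem_univ _⟩

end Aux

set_option maxHeartbeats 2000000 in
/-- (Formula (2.6) of the paper.) The spin marginal of `P_L^{±,c,h}` is a
convex combination, over the attainable magnetizations `M`, of the zero-field Ising
measures conditioned on `M_L = M`. -/
theorem statement16 (d L : ℕ) (hd : 1 ≤ d) (hL : 1 ≤ L) (J h κ c : ℝ)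
    (hJ : 0 < J) (hκ : 0 < κ) (hc : c ∈ Set.Ioo (0 : ℝ) 1) (bc : Bool)
    (A : Spins d L → Prop) :
    condProb d L J h κ c bc (fun σ _ => A σ) =
      ∑ M ∈ Finset.image (magn d L) Finset.univ,
        condProb d L J h κ c bc (fun σ _ => magn d L σ = M) *
          (isingProb d L J bc (fun σ => A σ ∧ magn d L σ = M) /
            isingProb d L J bc (fun σ => magn d L σ = M)) := by
  classical
  have hZ := isingZ_pos (d := d) (L := L) J bc
  have hterm : ∀ M ∈ Finset.image (magn d L) Finset.univ,
      condProb d L J h κ c bc (fun σ _ => magn d L σ = M) *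
        (isingProb d L J bc (fun σ => A σ ∧ magn d L σ = M) /
          isingProb d L J bc (fun σ => magn d L σ = M))
      = (∑ σ : Spins d L, if A σ ∧ magn d L σ = M then Real.exp (J * pairSum d L bc σ + h * (magn d L σ : ℝ)) * Wt d L κ c σ else 0)
        / (∑ σ : Spins d L, Real.exp (J * pairSum d L bc σ + h * (magn d L σ : ℝ)) * Wt d L κ c σ) := by
    intro M hM
    obtain ⟨σ₀, -, hσ₀⟩ := Finset.mem_image.mp hM
    rw [condProb_eq, isingProb_eq, isingProb_eq]
    set ZM : ℝ := ∑ σ : Spins d L, if magn d L σ = M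
      then Real.exp (J * pairSum d L bc σ) else 0 with hZM
    set ZAM : ℝ := ∑ σ : Spins d L, if A σ ∧ magn d L σ = M
      then Real.exp (J * pairSum d L bc σ) else 0 with hZAM
    have hZMpos : 0 < ZM := by
      rw [hZM]
      refine Finset.sum_pos' (fun σ _ => ?_) ⟨σ₀, Finset.mem_univ _, ?_⟩
      · split_ifs
        exacts [(Real.exp_pos _).le, le_rfl]
      · rw [if_pos hσ₀]
        exact Real.exp_pos _
    have hGM : ∀ σ : Spins d L, magn d L σ = M →
        Real.exp (J * pairSum d L bc σ + h * (magn d L σ : ℝ)) * Wt d L κ c σ = Real.exp (h * (M : ℝ)) * Wt d L κ c σ₀ * Real.exp (J * pairSum d L bc σ) := by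
      intro σ hσ
      rw [Real.exp_add, Wt_eq κ c (hσ.trans hσ₀.symm), hσ]
      ring
    have h1 : (∑ σ : Spins d L, if magn d L σ = M then Real.exp (J * pairSum d L bc σ + h * (magn d L σ : ℝ)) * Wt d L κ c σ else 0)
        = Real.exp (h * (M : ℝ)) * Wt d L κ c σ₀ * ZM := by
      rw [hZM, Finset.mul_sum]
      refine Finset.sum_congr rfl fun σ _ => ?_
      by_cases hσ : magn d L σ = M
      · simp only [if_pos hσ]; exact hGM σ hσ
      · simp only [if_neg hσ, mul_zero]
    have h2 : (∑ σ : Spins d L, if A σ ∧ magn d L σ = M then Real.exp (J * pairSum d L bc σ + h * (magn d L σ : ℝ)) * Wt d L κ c σ else 0)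
        = Real.exp (h * (M : ℝ)) * Wt d L κ c σ₀ * ZAM := by
      rw [hZAM, Finset.mul_sum]
      refine Finset.sum_congr rfl fun σ _ => ?_
      by_cases hσ : A σ ∧ magn d L σ = M
      · simp only [if_pos hσ]; exact hGM σ hσ.2
      · simp only [if_neg hσ, mul_zero]
    have hratio : (ZAM / isingZ d L J bc) / (ZM / isingZ d L J bc) = ZAM / ZM := by
      field_simp
    have key : (∑ σ : Spins d L, if magn d L σ = M
          then Real.exp (J * pairSum d L bc σ + h * (magn d L σ : ℝ)) * Wt d L κ c σ else 0)
          / (∑ σ : Spins d L,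
              Real.exp (J * pairSum d L bc σ + h * (magn d L σ : ℝ)) * Wt d L κ c σ)
        * ((∑ σ : Spins d L, if A σ ∧ magn d L σ = M
              then Real.exp (J * pairSum d L bc σ) else 0) / isingZ d L J bc
          / ((∑ σ : Spins d L, if magn d L σ = M
              then Real.exp (J * pairSum d L bc σ) else 0) / isingZ d L J bc))
        = (∑ σ : Spins d L, if A σ ∧ magn d L σ = M
            then Real.exp (J * pairSum d L bc σ + h * (magn d L σ : ℝ)) * Wt d L κ c σ else 0)
          / (∑ σ : Spins d L,
              Real.exp (J * pairSum d L bc σ + h * (magn d L σ : ℝ)) * Wt d L κ c σ) := by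
      rw [h1, h2, ← hZM, ← hZAM, hratio, div_mul_eq_mul_div]
      congr 1
      field_simp
    convert key using 3 <;> congr!

  rw [condProb_eq, Finset.sum_congr rfl hterm, ← Finset.sum_div]
  congr 1
  rw [← Finset.sum_fiberwise_of_maps_to
    (fun σ _ => Finset.mem_image_of_mem (magn d L) (Finset.mem_univ σ))
    (fun σ => if A σ then Real.exp (J * pairSum d L bc σ + h * (magn d L σ : ℝ)) * Wt d L κ c σ else 0)]
  refine Finset.sum_congr rfl fun M _ => ?_
  rw [Finset.sum_filter]
  refine Finset.sum_congr rfl fun σ _ => ?_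
  by_cases h1 : magn d L σ = M <;> by_cases h2 : A σ <;> simp [h1, h2]
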